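/- Let a ∈ ℝ, b ∈ [a, ∞) with max{|a|, |b|} ≥ 2, let d, L ∈ ℕ, ε ∈ (0, 2^d), and let F : ℝ^d → ℝ be a function satisfying sup_{x ∈ [a,b]^d} |F(x) - ∏_{i=1}^d x_i| ≤ ε, such that F is the realization of a ReLU network with at most L layers, P parameters, and all parameters of absolute value at most S. Then P·max{S,1} ≥ ((2^d - ε)/(2d))^{1/L}. -/
import Mathlib


theorem stmt15 (a b : ℝ) (hab : a ≤ b) (hmax : 2 ≤ max |a| |b|)
    (d L : ℕ) (hd : 1 ≤ d) (hL : 1 ≤ L)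
    (ε : ℝ) (hε0 : 0 < ε) (hεd : ε < 2 ^ d)
    (F : (Fin d → ℝ) → ℝ)
    (L' : ℕ) (hL'1 : 1 ≤ L') (hL'L : L' ≤ L)
    (l : Fin (L' + 1) → ℕ) (hl0 : l 0 = d) (hlL : l (Fin.last L') = 1)
    (S : ℝ)
    (W : ∀ k : Fin L', Fin (l k.succ) → Fin (l k.castSucc) → ℝ)
    (B : ∀ k : Fin L', Fin (l k.succ) → ℝ)
    (hW : ∀ k i j, |W k i j| ≤ S) (hB : ∀ k i, |B k i| ≤ S)
    (hreal : ∀ x : Fin d → ℝ, ∃ y : ∀ k : Fin (L' + 1), Fin (l k) → ℝ,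
      (∀ j : Fin (l 0), y 0 j = x (Fin.cast hl0 j)) ∧
      (∀ k : Fin L', (k : ℕ) + 1 < L' →
        y k.succ = fun i => max (∑ j, W k i j * y k.castSucc j + B k i) 0) ∧
      (∀ k : Fin L', (k : ℕ) + 1 = L' →
        y k.succ = fun i => ∑ j, W k i j * y k.castSucc j + B k i) ∧
      (∀ i, y (Fin.last L') i = F x))
    (happrox : ∀ x : Fin d → ℝ, (∀ i, x i ∈ Set.Icc a b) → |F x - ∏ i, x i| ≤ ε) :
    ((2 ^ d - ε) / (2 * d)) ^ ((1 : ℝ) / L) ≤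
      (∑ k : Fin L', (l k.succ : ℝ) * ((l k.castSucc : ℝ) + 1)) * max S 1 := by
  set M : ℝ := max S 1 with hM
  set P : ℝ := ∑ k : Fin L', (l k.succ : ℝ) * ((l k.castSucc : ℝ) + 1) with hP
  set c : ℝ := max |a| |b| with hc
  have hM1 : 1 ≤ M := le_max_right _ _
  have hWM : ∀ k i j, |W k i j| ≤ M := fun k i j => (hW k i j).trans (le_max_left _ _)
  have hBM : ∀ k i, |B k i| ≤ M := fun k i => (hB k i).trans (le_max_left _ _)
  have hterm : ∀ k : Fin L', (l k.succ : ℝ) * ((l k.castSucc : ℝ) + 1) ≤ P := by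
    intro k
    exact Finset.single_le_sum (f := fun k : Fin L' => (l k.succ : ℝ) * ((l k.castSucc : ℝ) + 1))
      (fun j _ => by positivity) (Finset.mem_univ k)
  have hP1 : 1 ≤ P := by
    obtain ⟨k0, hk0⟩ : ∃ k0 : Fin L', k0.succ = Fin.last L' :=
      ⟨⟨L' - 1, by omega⟩, by apply Fin.ext; simp [Fin.last]; omega⟩
    have h := hterm k0
    rw [hk0, hlL] at h
    push_cast at h
    nlinarith [(Nat.cast_nonneg (l k0.castSucc) : (0:ℝ) ≤ _), h]
  have hPM1 : 1 ≤ P * M := by nlinarith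
  have hc2 : (2 : ℝ) ≤ c := hmax
  set v : ℝ := if |b| ≤ |a| then a else b with hv
  have hvabs : |v| = c := by
    rw [hv, hc]
    split_ifs with h
    · rw [max_eq_left h]
    · rw [max_eq_right (le_of_not_ge h)]
  have hvmem : v ∈ Set.Icc a b := by
    rw [hv]; split_ifs
    · exact ⟨le_refl a, hab⟩
    · exact ⟨hab, le_refl b⟩
  set x : Fin d → ℝ := fun _ => v with hx
  obtain ⟨y, hy0, hyh, hyl, hyF⟩ := hreal x
  have key : ∀ k : Fin (L' + 1), ∀ j, |y k j| ≤ c * (P * M) ^ (k : ℕ) := by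
    intro k
    induction k using Fin.induction with
    | zero =>
      intro j
      rw [hy0 j]
      have h0 : ((0 : Fin (L' + 1)) : ℕ) = 0 := rfl
      rw [h0, pow_zero, mul_one, hx, ← hvabs]
    | succ k ih =>
      intro i
      have hform : |y k.succ i| ≤ |∑ j, W k i j * y k.castSucc j + B k i| := by
        rcases lt_or_eq_of_le (Nat.succ_le_of_lt k.isLt) with h | h
        · rw [hyh k h]
          simp only
          rw [abs_of_nonneg (le_max_right _ _)]
          exact max_le (le_abs_self _) (abs_nonneg _)
        · rw [hyl k h]
      have hsum : |∑ j, W k i j * y k.castSucc j + B k i| ≤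
          M * ((l k.castSucc : ℝ) * (c * (P * M) ^ (k : ℕ)) + 1) := by
        calc |∑ j, W k i j * y k.castSucc j + B k i|
            ≤ |∑ j, W k i j * y k.castSucc j| + |B k i| := abs_add_le _ _
          _ ≤ (∑ j, |W k i j * y k.castSucc j|) + M :=
              add_le_add (Finset.abs_sum_le_sum_abs _ _) (hBM k i)
          _ ≤ (∑ _j : Fin (l k.castSucc), M * (c * (P * M) ^ (k : ℕ))) + M := by
              gcongr with j
              rw [abs_mul]
              exact mul_le_mul (hWM k i j) (ih j) (abs_nonneg _)
                (le_trans zero_le_one hM1)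
          _ = M * ((l k.castSucc : ℝ) * (c * (P * M) ^ (k : ℕ)) + 1) := by
              rw [Finset.sum_const, Finset.card_univ, Fintype.card_fin, nsmul_eq_mul]
              ring
      have hlk1 : (1 : ℝ) ≤ (l k.succ : ℝ) := by
        have : 0 < l k.succ := Fin.pos_iff_nonempty.mpr ⟨i⟩
        exact_mod_cast this
      have hlP : (l k.castSucc : ℝ) + 1 ≤ P := by
        have h := hterm k
        nlinarith [(Nat.cast_nonneg (l k.castSucc) : (0:ℝ) ≤ _)]
      have hQ : (1 : ℝ) ≤ (P * M) ^ (k : ℕ) := one_le_pow₀ hPM1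
      have hn0 : (0 : ℝ) ≤ (l k.castSucc : ℝ) := Nat.cast_nonneg _
      calc |y k.succ i| ≤ M * ((l k.castSucc : ℝ) * (c * (P * M) ^ (k : ℕ)) + 1) :=
            hform.trans hsum
        _ ≤ c * (P * M) ^ ((k : ℕ) + 1) := by
            rw [pow_succ]
            set Q : ℝ := (P * M) ^ (k : ℕ) with hQdef
            set n : ℝ := (l k.castSucc : ℝ) with hndef
            have hcQ : 1 ≤ c * Q := by nlinarith
            have hA : (n + 1) * (c * Q) ≤ P * (c * Q) :=
              mul_le_mul_of_nonneg_right hlP (by nlinarith)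
            have step : n * (c * Q) + 1 ≤ P * (c * Q) := by nlinarith
            calc M * (n * (c * Q) + 1) ≤ M * (P * (c * Q)) :=
                  mul_le_mul_of_nonneg_left step (by linarith)
              _ = c * (Q * (P * M)) := by ring
  -- bound on F x
  have i0 : Fin (l (Fin.last L')) := ⟨0, by rw [hlL]; norm_num⟩
  have hFx : F x = y (Fin.last L') i0 := (hyF i0).symm
  have hFbound : |F x| ≤ c * (P * M) ^ L' := by
    rw [hFx]
    have h := key (Fin.last L') i0
    rwa [Fin.val_last] at h
  have hprod : ∏ i : Fin d, x i = v ^ d := by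
    simp only [hx, Finset.prod_const, Finset.card_univ, Fintype.card_fin]
  have happ := happrox x (fun _ => hvmem)
  rw [hprod] at happ
  have hcd : |v ^ d| = c ^ d := by rw [abs_pow, hvabs]
  have hFlow : c ^ d - ε ≤ |F x| := by
    have h1 : |v ^ d| - |F x| ≤ |F x - v ^ d| := by
      rw [abs_sub_comm]; exact abs_sub_abs_le_abs_sub _ _
    rw [hcd] at h1
    linarith
  have hmain : c ^ d - ε ≤ c * (P * M) ^ L' := hFlow.trans hFbound
  -- reduce c to 2
  have hd1 : d - 1 + 1 = d := by omega
  have h2d : (2 : ℝ) ^ d = 2 * 2 ^ (d - 1) := by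
    rw [← pow_succ']; congr 1; omega
  have hcd2 : c * 2 ^ (d - 1) ≤ c ^ d := by
    have hps : c ^ (d - 1 + 1) = c * c ^ (d - 1) := pow_succ' c (d - 1)
    rw [hd1] at hps
    calc c * 2 ^ (d - 1) ≤ c * c ^ (d - 1) := by gcongr <;> linarith
      _ = c ^ d := hps.symm
  have hQL' : (1 : ℝ) ≤ (P * M) ^ L' := one_le_pow₀ hPM1
  have h2 : (2 : ℝ) ^ d - ε ≤ 2 * (P * M) ^ L' := by
    rcases le_or_gt ((P * M) ^ L') (2 ^ (d - 1)) with h | h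
    · have hring : c * (2 ^ (d - 1) - (P * M) ^ L') =
          c * 2 ^ (d - 1) - c * ((P * M) ^ L') := by ring
      have hkey : c * (2 ^ (d - 1) - (P * M) ^ L') ≤ ε := by
        rw [hring]; linarith [hmain, hcd2]
      have h2' : 2 * (2 ^ (d - 1) - (P * M) ^ L') ≤ c * (2 ^ (d - 1) - (P * M) ^ L') :=
        mul_le_mul_of_nonneg_right hc2 (by linarith)
      linarith [h2d]
    · linarith [h2d, hQL']
  have h3 : (2 : ℝ) ^ d - ε ≤ 2 * (P * M) ^ L := by
    have : (P * M) ^ L' ≤ (P * M) ^ L := pow_le_pow_right₀ hPM1 hL'L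
    linarith
  have ht0 : (0 : ℝ) < 2 ^ d - ε := by linarith
  have hd1' : (1 : ℝ) ≤ (d : ℝ) := by exact_mod_cast hd
  have h4 : ((2 : ℝ) ^ d - ε) / (2 * d) ≤ (P * M) ^ L := by
    rw [div_le_iff₀ (by linarith : (0:ℝ) < 2 * d)]
    have hPL : (1 : ℝ) ≤ (P * M) ^ L := hQL'.trans (pow_le_pow_right₀ hPM1 hL'L)
    have h5 : (P * M) ^ L * 2 ≤ (P * M) ^ L * (2 * d) :=
      mul_le_mul_of_nonneg_left (by linarith) (by linarith)
    linarith
  have hPM0 : (0 : ℝ) ≤ P * M := by linarith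
  have hLne : (L : ℝ) ≠ 0 := Nat.cast_ne_zero.mpr (by omega)
  calc (((2 : ℝ) ^ d - ε) / (2 * d)) ^ ((1 : ℝ) / L)
      ≤ ((P * M) ^ L) ^ ((1 : ℝ) / L) :=
        Real.rpow_le_rpow (by positivity) h4 (by positivity)
    _ = P * M := by
        rw [← Real.rpow_natCast (P * M) L, ← Real.rpow_mul hPM0, mul_one_div,
          div_self hLne, Real.rpow_one]
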